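/- Let X be a δ-hyperbolic geodesic metric space and let f, g ∈ Isom(X) be independent hyperbolic isometries, with A_+ and A_- the attracting and repelling fixed points of f in ∂X. Then there are disjoint neighborhoods U_+ of A_+ and U_- of A_- in X̄ and an N ≥ 1 such that for every k ≥ N, g^k U_+ ∩ U_- = ∅. -/

import Mathlib

open Filter Metric Set

noncomputable section

universe u

variable {X : Type u} [MetricSpace X]

/-- The Gromov product `(x·y)_w = ½(d(x,w) + d(w,y) − d(x,y))`. -/
def gromovProduct (w x y : X) : ℝ := (dist x w + dist w y - dist x y) / 2

/-- `γ` is a geodesic from `x` to `y`, parametrized by arc length on `[0, dist x y]`. -/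
structure IsGeodesicSegment (γ : ℝ → X) (x y : X) : Prop where
  source : γ 0 = x
  target : γ (dist x y) = y
  isom : ∀ ⦃s t : ℝ⦄, s ∈ Set.Icc (0 : ℝ) (dist x y) → t ∈ Set.Icc (0 : ℝ) (dist x y) →
    dist (γ s) (γ t) = |s - t|

/-- A geodesic metric space is `δ`-hyperbolic: every pair of points is joined by a
geodesic, every geodesic triangle is `δ`-slim, every geodesic triangle has insize at
most `δ`, and the Gromov product is `δ`-hyperbolic. -/
structure IsDeltaHyperbolic (X : Type u) [MetricSpace X] (δ : ℝ) : Prop where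
  delta_nonneg : 0 ≤ δ
  geodesic : ∀ x y : X, ∃ γ : ℝ → X, IsGeodesicSegment γ x y
  slim : ∀ (x y z : X) (α β γ : ℝ → X),
    IsGeodesicSegment α y z → IsGeodesicSegment β z x → IsGeodesicSegment γ x y →
    ∀ s ∈ Set.Icc (0 : ℝ) (dist y z),
      (∃ t ∈ Set.Icc (0 : ℝ) (dist z x), dist (α s) (β t) ≤ δ) ∨
      (∃ t ∈ Set.Icc (0 : ℝ) (dist x y), dist (α s) (γ t) ≤ δ)
  insize : ∀ (x y z : X) (α β γ : ℝ → X),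
    IsGeodesicSegment α y z → IsGeodesicSegment β z x → IsGeodesicSegment γ x y →
    dist (α (gromovProduct y x z)) (β (gromovProduct z x y)) ≤ δ ∧
    dist (β (gromovProduct z x y)) (γ (gromovProduct x y z)) ≤ δ ∧
    dist (γ (gromovProduct x y z)) (α (gromovProduct y x z)) ≤ δ
  gromov : ∀ w x y z : X,
    min (gromovProduct w x y) (gromovProduct w y z) - δ ≤ gromovProduct w x z

/-- An isometry `f` of `X` is hyperbolic if for every `x ∈ X` there is `t > 0` with
`t|m − n| ≤ d(f^m x, f^n x)` for all integers `m, n`. -/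
def IsHyperbolicIsometry (f : X ≃ᵢ X) : Prop :=
  ∀ x : X, ∃ t : ℝ, 0 < t ∧
    ∀ m n : ℤ, t * |(m : ℝ) - (n : ℝ)| ≤ dist ((f ^ m) x) ((f ^ n) x)

/-- A sequence converges to infinity if the Gromov products `(x_i·x_j)_w → ∞`. -/
def ConvergesToInfinity (w : X) (u : ℕ → X) : Prop :=
  Tendsto (fun p : ℕ × ℕ => gromovProduct w (u p.1) (u p.2)) atTop atTop

/-- Two sequences are equivalent if the mixed Gromov products tend to infinity. -/
def SeqEquiv (w : X) (u v : ℕ → X) : Prop :=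
  Tendsto (fun p : ℕ × ℕ => gromovProduct w (u p.1) (v p.2)) atTop atTop

/-- Sequences converging to infinity. -/
def BoundarySeq (w : X) : Type u := {u : ℕ → X // ConvergesToInfinity w u}

/-- The Gromov boundary `∂X`: equivalence classes of sequences converging to infinity. -/
def GromovBoundary (w : X) : Type u :=
  Quot (fun u v : BoundarySeq w => SeqEquiv w u.1 v.1)

/-- The boundary point determined by a sequence converging to infinity. -/
def boundaryPt (w : X) (u : BoundarySeq w) : GromovBoundary w := Quot.mk _ u

/-- `X̄ = X ∪ ∂X`. -/
def GromovClosure (w : X) : Type u := X ⊕ GromovBoundary w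

theorem gromovProduct_basepoint_ge (w w' x y : X) :
    gromovProduct w x y - dist w w' ≤ gromovProduct w' x y := by
  have h1 : |dist w' x - dist w x| ≤ dist w' w := abs_dist_sub_le w' w x
  have h2 : |dist w' y - dist w y| ≤ dist w' w := abs_dist_sub_le w' w y
  rw [abs_le] at h1 h2
  unfold gromovProduct
  rw [dist_comm x w', dist_comm x w, dist_comm w w']
  linarith [h1.1, h1.2, h2.1, h2.2]

theorem gromovProduct_isometry (f : X ≃ᵢ X) (w x y : X) :
    gromovProduct w (f x) (f y) = gromovProduct (f.symm w) x y := by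
  unfold gromovProduct
  conv_lhs => rw [show w = f (f.symm w) from (f.apply_symm_apply w).symm]
  rw [f.dist_eq, f.dist_eq, f.dist_eq]

theorem convergesToInfinity_isometry {w : X} (f : X ≃ᵢ X) {u : ℕ → X}
    (h : ConvergesToInfinity w u) :
    ConvergesToInfinity w (fun n => f (u n)) := by
  refine tendsto_atTop_mono (fun p => ?_)
    (tendsto_atTop_add_const_right atTop (-dist w (f.symm w)) h)
  have h1 := gromovProduct_basepoint_ge w (f.symm w) (u p.1) (u p.2)
  have h2 := gromovProduct_isometry f w (u p.1) (u p.2)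
  dsimp only
  linarith

theorem seqEquiv_isometry {w : X} (f : X ≃ᵢ X) {u v : ℕ → X}
    (h : SeqEquiv w u v) :
    SeqEquiv w (fun n => f (u n)) (fun n => f (v n)) := by
  refine tendsto_atTop_mono (fun p => ?_)
    (tendsto_atTop_add_const_right atTop (-dist w (f.symm w)) h)
  have h1 := gromovProduct_basepoint_ge w (f.symm w) (u p.1) (v p.2)
  have h2 := gromovProduct_isometry f w (u p.1) (v p.2)
  dsimp only
  linarith

/-- The extension of an isometry of `X` to the Gromov boundary. -/
def boundaryMap (w : X) (f : X ≃ᵢ X) : GromovBoundary w → GromovBoundary w :=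
  Quot.lift
    (fun u : BoundarySeq w =>
      boundaryPt w ⟨fun n => f (u.1 n), convergesToInfinity_isometry f u.2⟩)
    (fun _ _ h => Quot.sound (seqEquiv_isometry f h))

/-- The extension of an isometry of `X` to `X̄ = X ∪ ∂X`. -/
def closureMap (w : X) (f : X ≃ᵢ X) : GromovClosure w → GromovClosure w
  | Sum.inl x => Sum.inl (f x)
  | Sum.inr a => Sum.inr (boundaryMap w f a)

/-- The Gromov product of a boundary point with a point of `X̄`, extended by
taking infima of liminfs over representative sequences. -/
noncomputable def boundaryGP (w : X) (a : GromovBoundary w) : GromovClosure w → ℝ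
  | Sum.inl p => sInf {r : ℝ | ∃ u : BoundarySeq w, boundaryPt w u = a ∧
      r = Filter.liminf (fun n => gromovProduct w (u.1 n) p) atTop}
  | Sum.inr b => sInf {r : ℝ | ∃ u v : BoundarySeq w, boundaryPt w u = a ∧
      boundaryPt w v = b ∧
      r = Filter.liminf (fun n => gromovProduct w (u.1 n) (v.1 n)) atTop}

/-- The basis for the topology on `X̄`: open balls in `X`, and the sets
`N(â,k) = {y : (â·y)_w > k}` for boundary points `â` and `k > 0`. -/
def closureBasis (w : X) : Set (Set (GromovClosure w)) :=
  {S | (∃ (x : X) (r : ℝ), 0 < r ∧ S = Sum.inl '' Metric.ball x r) ∨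
       (∃ (a : GromovBoundary w) (k : ℝ), 0 < k ∧ S = {y | k < boundaryGP w a y})}

/-- The topology on `X̄` generated by the basis above. -/
def closureTop (w : X) : TopologicalSpace (GromovClosure w) :=
  TopologicalSpace.generateFrom (closureBasis w)

/-- `S ⊆ X̄` is a neighborhood of `p ∈ X̄`. -/
def IsNeighborhood (w : X) (S : Set (GromovClosure w)) (p : GromovClosure w) : Prop :=
  S ∈ @nhds (GromovClosure w) (closureTop w) p

/-- `a ∈ ∂X` is the attracting fixed point of `f`: it is represented by the
sequence `(f^n x)` for a point `x ∈ X`. -/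
def IsAttractingFixedPt (w : X) (f : X ≃ᵢ X) (a : GromovBoundary w) : Prop :=
  ∃ (x : X) (h : ConvergesToInfinity w (fun n : ℕ => (f ^ (n : ℤ)) x)),
    boundaryPt w ⟨fun n : ℕ => (f ^ (n : ℤ)) x, h⟩ = a

/-- `a ∈ ∂X` is the repelling fixed point of `f`: the attracting fixed point of `f⁻¹`. -/
def IsRepellingFixedPt (w : X) (f : X ≃ᵢ X) (a : GromovBoundary w) : Prop :=
  IsAttractingFixedPt w f⁻¹ a

/-- The concatenation `α · (f α)` of a path `α` defined on `[0, L]` with its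
image under `f`, parametrized on `[0, 2L]`. -/
noncomputable def concatPath (f : X ≃ᵢ X) (α : ℝ → X) (L : ℝ) : ℝ → X :=
  fun s => if s ≤ L then α s else f (α (s - L))


namespace IHN

theorem gp_nonneg (w x y : X) : 0 ≤ gromovProduct w x y := by
  have := dist_triangle x w y
  unfold gromovProduct; linarith

theorem gp_comm (w x y : X) : gromovProduct w x y = gromovProduct w y x := by
  unfold gromovProduct; rw [dist_comm x w, dist_comm w y, dist_comm x y]; ring

theorem gp_le_left (w x y : X) : gromovProduct w x y ≤ dist x w := by
  have := dist_triangle x w y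
  have := abs_dist_sub_le w y x
  rw [abs_le] at this
  unfold gromovProduct
  have h := dist_triangle w x y
  rw [dist_comm w x] at h
  linarith

theorem gp_le_right (w x y : X) : gromovProduct w x y ≤ dist w y := by
  rw [gp_comm]; rw [dist_comm]; exact gp_le_left w y x

theorem gp_move_right (w x y y' : X) : gromovProduct w x y - dist y y' ≤ gromovProduct w x y' := by
  have h1 := dist_triangle w y' y
  have h2 := dist_triangle x y y'
  unfold gromovProduct
  rw [dist_comm y' y] at h1
  linarith

theorem gp_move_left (w x x' y : X) : gromovProduct w x y - dist x x' ≤ gromovProduct w x' y := by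
  rw [gp_comm w x y, gp_comm w x' y]; exact gp_move_right w y x x'

/-- `(p·w)_z + (p·z)_w = d z w`. -/
theorem gp_base_swap (z w p : X) : gromovProduct z p w + gromovProduct w p z = dist z w := by
  unfold gromovProduct
  rw [dist_comm z w, dist_comm p w, dist_comm p z]
  ring

section hyp
variable {δ : ℝ} (hδ : ∀ w x y z : X,
    min (gromovProduct w x y) (gromovProduct w y z) - δ ≤ gromovProduct w x z)

include hδ

/-- The Gromov product of two points seen from a far basepoint. -/
theorem gp_far (w z p q : X) :
    dist w z - max (gromovProduct w p z) (gromovProduct w q z) - δ ≤ gromovProduct z p q := by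
  have h := hδ z p w q
  have h1 : gromovProduct z p w = dist z w - gromovProduct w p z := by
    have := gp_base_swap z w p; linarith
  have h2 : gromovProduct z w q = dist z w - gromovProduct w q z := by
    have h3 : gromovProduct z w q = gromovProduct z q w := gp_comm z w q
    have := gp_base_swap z w q; linarith
  rw [h1, h2] at h
  rw [dist_comm w z]
  rcases le_total (gromovProduct w p z) (gromovProduct w q z) with hc | hc
  · rw [max_eq_right hc]
    rw [min_eq_right (by linarith)] at h
    linarith
  · rw [max_eq_left hc]
    rw [min_eq_left (by linarith)] at h
    linarith

/-- Four point condition. -/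
theorem four_point (p q r s : X) :
    dist p s + dist q r ≤ max (dist p r + dist q s) (dist p q + dist r s) + 2 * δ := by
  have h := hδ s r p q
  unfold gromovProduct at h
  rcases min_cases ((dist r s + dist s p - dist r p) / 2) ((dist p s + dist s q - dist p q) / 2)
      with ⟨he, _⟩ | ⟨he, _⟩ <;> rw [he] at h
  · have : dist p s + dist q r ≤ dist p r + dist q s + 2*δ := by
      rw [dist_comm q r, dist_comm q s, dist_comm p s, dist_comm p r]; linarith
    exact le_trans this (by apply add_le_add_left; exact le_max_left _ _)
  · have : dist p s + dist q r ≤ dist p q + dist r s + 2*δ := by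
      rw [dist_comm q r]; linarith
    exact le_trans this (by apply add_le_add_left; exact le_max_right _ _)

end hyp


section seqmach

theorem tendsto_pair_iff {F : ℕ × ℕ → ℝ} :
    Tendsto F atTop atTop ↔ ∀ R : ℝ, ∃ N : ℕ, ∀ i j : ℕ, N ≤ i → N ≤ j → R ≤ F (i, j) := by
  rw [Filter.tendsto_atTop]
  constructor
  · intro h R
    have h2 := h R
    rw [eventually_atTop] at h2
    obtain ⟨a, ha⟩ := h2
    exact ⟨max a.1 a.2, fun i j hi hj =>
      ha (i, j) ⟨le_trans (le_max_left _ _) hi, le_trans (le_max_right _ _) hj⟩⟩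
  · intro h R
    obtain ⟨N, hN⟩ := h R
    rw [eventually_atTop]
    exact ⟨(N, N), fun p hp => hN p.1 p.2 hp.1 hp.2⟩

theorem liminf_le_of_ev {f : ℕ → ℝ} {C : ℝ} (hC : 0 ≤ C) (h : ∀ᶠ n in atTop, f n ≤ C) :
    liminf f atTop ≤ C := by
  rw [liminf_eq]
  apply Real.sSup_le _ hC
  intro a ha
  obtain ⟨n, h1, h2⟩ := (ha.and h).exists
  linarith

theorem liminf_ge_of_ev {f : ℕ → ℝ} {K : ℝ} (h : ∀ᶠ n in atTop, K ≤ f n)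
    (hnt : ¬ Tendsto f atTop atTop) : K ≤ liminf f atTop := by
  rw [liminf_eq]
  have hb : BddAbove {a | ∀ᶠ n in atTop, a ≤ f n} := by
    by_contra hb
    apply hnt
    rw [Filter.tendsto_atTop]
    intro b
    obtain ⟨a, ha, hab⟩ := not_bddAbove_iff.mp hb b
    exact ha.mono fun n hn => le_trans hab.le hn
  exact le_csSup hb h

theorem ev_gt_of_liminf_gt {f : ℕ → ℝ} {k : ℝ} (hk : 0 ≤ k) (h : k < liminf f atTop) :
    ∀ᶠ n in atTop, k < f n := by
  rw [liminf_eq] at h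
  set S := {a | ∀ᶠ n in atTop, a ≤ f n} with hS
  have hne : S.Nonempty := by
    by_contra hne
    rw [Set.not_nonempty_iff_eq_empty] at hne
    rw [hne, Real.sSup_empty] at h; linarith
  have hb : BddAbove S := by
    by_contra hb
    rw [Real.sSup_of_not_bddAbove hb] at h; linarith
  obtain ⟨a, haS, hka⟩ := exists_lt_of_lt_csSup hne h
  exact haS.mono fun n hn => lt_of_lt_of_le hka hn

theorem liminf_nonneg {f : ℕ → ℝ} (h : ∀ n, 0 ≤ f n) : 0 ≤ liminf f atTop := by
  rw [liminf_eq]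
  by_cases hb : BddAbove {a | ∀ᶠ n in atTop, a ≤ f n}
  · exact le_csSup hb (by filter_upwards with n using h n)
  · rw [Real.sSup_of_not_bddAbove hb]

variable {w : X}

theorem cti_iff {u : ℕ → X} : ConvergesToInfinity w u ↔
    ∀ R : ℝ, ∃ N : ℕ, ∀ i j : ℕ, N ≤ i → N ≤ j → R ≤ gromovProduct w (u i) (u j) :=
  tendsto_pair_iff

theorem seqEquiv_iff {u v : ℕ → X} : SeqEquiv w u v ↔
    ∀ R : ℝ, ∃ N : ℕ, ∀ i j : ℕ, N ≤ i → N ≤ j → R ≤ gromovProduct w (u i) (v j) :=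
  tendsto_pair_iff

theorem seqEquiv_symm {u v : ℕ → X} (h : SeqEquiv w u v) : SeqEquiv w v u := by
  rw [seqEquiv_iff] at h ⊢
  intro R
  obtain ⟨N, hN⟩ := h R
  exact ⟨N, fun i j hi hj => (gp_comm w (u j) (v i)) ▸ hN j i hj hi⟩

/-- closeness transfers CTI -/
theorem cti_of_close {u v : ℕ → X} {c : ℝ} (hc : ∀ n, dist (u n) (v n) ≤ c)
    (h : ConvergesToInfinity w u) : ConvergesToInfinity w v := by
  rw [cti_iff] at h ⊢
  intro R
  obtain ⟨N, hN⟩ := h (R + c + c)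
  refine ⟨N, fun i j hi hj => ?_⟩
  have h1 := gp_move_left w (u i) (v i) (u j)
  have h2 := gp_move_right w (v i) (u j) (v j)
  have := hN i j hi hj
  have := hc i; have := hc j
  linarith

theorem seqEquiv_of_close_right {u v v' : ℕ → X} {c : ℝ} (hc : ∀ n, dist (v n) (v' n) ≤ c)
    (h : SeqEquiv w u v) : SeqEquiv w u v' := by
  rw [seqEquiv_iff] at h ⊢
  intro R
  obtain ⟨N, hN⟩ := h (R + c)
  refine ⟨N, fun i j hi hj => ?_⟩
  have h2 := gp_move_right w (u i) (v j) (v' j)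
  have := hN i j hi hj
  have := hc j
  linarith

theorem seqEquiv_of_close_left {u u' v : ℕ → X} {c : ℝ} (hc : ∀ n, dist (u n) (u' n) ≤ c)
    (h : SeqEquiv w u v) : SeqEquiv w u' v :=
  seqEquiv_symm (seqEquiv_of_close_right hc (seqEquiv_symm h))

section hyp2
variable {δ : ℝ} (hδ : ∀ w x y z : X,
    min (gromovProduct w x y) (gromovProduct w y z) - δ ≤ gromovProduct w x z)
include hδ

theorem gp_chain {x y z : X} {A B : ℝ} (h1 : A ≤ gromovProduct w x y)
    (h2 : B ≤ gromovProduct w y z) : min A B - δ ≤ gromovProduct w x z := by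
  have hm : min A B ≤ min (gromovProduct w x y) (gromovProduct w y z) :=
    le_min (le_trans (min_le_left _ _) h1) (le_trans (min_le_right _ _) h2)
  linarith [hδ w x y z]

theorem seqEquiv_trans {u v z : ℕ → X} (h1 : SeqEquiv w u v) (h2 : SeqEquiv w v z) :
    SeqEquiv w u z := by
  rw [seqEquiv_iff] at h1 h2 ⊢
  intro R
  obtain ⟨N1, hN1⟩ := h1 (R + δ)
  obtain ⟨N2, hN2⟩ := h2 (R + δ)
  refine ⟨max N1 N2, fun i j hi hj => ?_⟩
  set p := max N1 N2
  have e1 := hN1 i p (le_trans (le_max_left _ _) hi) (le_max_left _ _)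
  have e2 := hN2 p j (le_max_right _ _) (le_trans (le_max_right _ _) hj)
  have := gp_chain hδ e1 e2
  rw [min_self] at this
  linarith

theorem seqEquiv_of_diag (hδ0 : 0 ≤ δ) {u v : ℕ → X} (hu : ConvergesToInfinity w u)
    (hv : ConvergesToInfinity w v)
    (h : Tendsto (fun n => gromovProduct w (u n) (v n)) atTop atTop) : SeqEquiv w u v := by
  rw [cti_iff] at hu hv
  rw [seqEquiv_iff]
  intro R
  obtain ⟨N1, hN1⟩ := hu (R + 2*δ)
  obtain ⟨N2, hN2⟩ := hv (R + 2*δ)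
  obtain ⟨p, hgp, hp⟩ := ((h.eventually_ge_atTop (R + 2*δ)).and
    (eventually_ge_atTop (max N1 N2))).exists
  refine ⟨max N1 N2, fun i j hi hj => ?_⟩
  have e1 := hN1 i p (le_trans (le_max_left _ _) hi) (le_trans (le_max_left _ _) hp)
  have step1 : R + δ ≤ gromovProduct w (u i) (v p) := by
    have := gp_chain hδ e1 hgp
    rw [min_self] at this; linarith
  have e2 := hN2 p j (le_trans (le_max_right _ _) hp) (le_trans (le_max_right _ _) hj)
  have h3 := gp_chain hδ step1 e2
  rcases min_cases (R + δ) (R + 2*δ) with ⟨he, _⟩ | ⟨he, _⟩ <;> rw [he] at h3 <;> linarith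

theorem equivalence_seqEquiv :
    Equivalence (fun a b : BoundarySeq w => SeqEquiv w a.1 b.1) :=
  ⟨fun a => a.2, seqEquiv_symm, fun h1 h2 => seqEquiv_trans hδ h1 h2⟩

theorem boundaryPt_eq_iff {u v : BoundarySeq w} :
    boundaryPt w u = boundaryPt w v ↔ SeqEquiv w u.1 v.1 := by
  constructor
  · intro h
    exact ((equivalence_seqEquiv hδ).eqvGen_iff).mp (Quot.eq.mp h)
  · exact fun h => Quot.sound h

theorem bounded_of_ne (hδ0 : 0 ≤ δ) {u v : BoundarySeq w} (h : boundaryPt w u ≠ boundaryPt w v) :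
    ∃ C : ℝ, 0 ≤ C ∧ ∃ T : ℕ, ∀ n m : ℕ, T ≤ n → T ≤ m →
      gromovProduct w (u.1 n) (v.1 m) ≤ C := by
  have hse : ¬ SeqEquiv w u.1 v.1 := fun hs => h ((boundaryPt_eq_iff hδ).mpr hs)
  rw [seqEquiv_iff] at hse
  push_neg at hse
  obtain ⟨R0, hR0⟩ := hse
  set R1 := max R0 0 with hR1def
  have hR10 : 0 ≤ R1 := le_max_right _ _
  obtain ⟨N1, hN1⟩ := cti_iff.mp u.2 (R1 + 2*δ + 1)
  obtain ⟨N2, hN2⟩ := cti_iff.mp v.2 (R1 + 2*δ + 1)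
  refine ⟨R1 + 2*δ, by linarith, max N1 N2, fun n m hn hm => ?_⟩
  obtain ⟨I, J, hI, hJ, hsmall⟩ := hR0 (max (max N1 N2) (max n m))
  have e1 : R1 + 2*δ + 1 ≤ gromovProduct w (u.1 I) (u.1 n) :=
    hN1 I n (le_trans (le_trans (le_max_left _ _) (le_max_left _ _)) hI)
      (le_trans (le_max_left _ _) hn)
  have e2 : R1 + 2*δ + 1 ≤ gromovProduct w (v.1 m) (v.1 J) :=
    hN2 m J (le_trans (le_max_right _ _) hm)
      (le_trans (le_trans (le_max_right _ _) (le_max_left _ _)) hJ)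
  by_contra hcon
  push_neg at hcon
  have s1 := gp_chain hδ (le_of_lt hcon) e2
  rw [min_eq_left (by linarith)] at s1
  have s2 := gp_chain hδ e1 (show R1 + δ ≤ gromovProduct w (u.1 n) (v.1 J) by linarith)
  rw [min_eq_right (by linarith)] at s2
  have hR0le : R0 ≤ R1 := le_max_left _ _
  linarith

end hyp2
end seqmach

section bgp
variable {w : X}

theorem boundaryGP_inr_def (w : X) (a b : GromovBoundary w) :
    boundaryGP w a (Sum.inr b) = sInf {r : ℝ | ∃ u v : BoundarySeq w, boundaryPt w u = a ∧
      boundaryPt w v = b ∧ r = liminf (fun n => gromovProduct w (u.1 n) (v.1 n)) atTop} := rfl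

theorem boundaryGP_inl_def (w : X) (a : GromovBoundary w) (p : X) :
    boundaryGP w a (Sum.inl p) = sInf {r : ℝ | ∃ u : BoundarySeq w, boundaryPt w u = a ∧
      r = liminf (fun n => gromovProduct w (u.1 n) p) atTop} := rfl

theorem bddBelow_inr (a b : GromovBoundary w) :
    BddBelow {r : ℝ | ∃ u v : BoundarySeq w, boundaryPt w u = a ∧
      boundaryPt w v = b ∧ r = liminf (fun n => gromovProduct w (u.1 n) (v.1 n)) atTop} := by
  refine ⟨0, fun r hr => ?_⟩
  obtain ⟨u, v, _, _, rfl⟩ := hr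
  exact liminf_nonneg (fun n => gp_nonneg _ _ _)

theorem bddBelow_inl (a : GromovBoundary w) (p : X) :
    BddBelow {r : ℝ | ∃ u : BoundarySeq w, boundaryPt w u = a ∧
      r = liminf (fun n => gromovProduct w (u.1 n) p) atTop} := by
  refine ⟨0, fun r hr => ?_⟩
  obtain ⟨u, _, rfl⟩ := hr
  exact liminf_nonneg (fun n => gp_nonneg _ _ _)

theorem boundaryGP_inr_le {a b : GromovBoundary w} (u v : BoundarySeq w)
    (hu : boundaryPt w u = a) (hv : boundaryPt w v = b) {C : ℝ} (hC : 0 ≤ C)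
    (h : ∀ᶠ n in atTop, gromovProduct w (u.1 n) (v.1 n) ≤ C) :
    boundaryGP w a (Sum.inr b) ≤ C := by
  rw [boundaryGP_inr_def]
  exact le_trans (csInf_le (bddBelow_inr a b) ⟨u, v, hu, hv, rfl⟩) (liminf_le_of_ev hC h)

theorem boundaryGP_inl_le {a : GromovBoundary w} (u : BoundarySeq w)
    (hu : boundaryPt w u = a) {p : X} {C : ℝ} (hC : 0 ≤ C)
    (h : ∀ᶠ n in atTop, gromovProduct w (u.1 n) p ≤ C) :
    boundaryGP w a (Sum.inl p) ≤ C := by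
  rw [boundaryGP_inl_def]
  exact le_trans (csInf_le (bddBelow_inl a p) ⟨u, hu, rfl⟩) (liminf_le_of_ev hC h)

theorem ev_of_lt_boundaryGP_inr {a b : GromovBoundary w} (u v : BoundarySeq w)
    (hu : boundaryPt w u = a) (hv : boundaryPt w v = b) {k : ℝ} (hk : 0 ≤ k)
    (h : k < boundaryGP w a (Sum.inr b)) :
    ∀ᶠ n in atTop, k < gromovProduct w (u.1 n) (v.1 n) := by
  apply ev_gt_of_liminf_gt hk
  refine lt_of_lt_of_le h ?_
  rw [boundaryGP_inr_def]
  exact csInf_le (bddBelow_inr a b) ⟨u, v, hu, hv, rfl⟩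

theorem ev_of_lt_boundaryGP_inl {a : GromovBoundary w} (u : BoundarySeq w)
    (hu : boundaryPt w u = a) {p : X} {k : ℝ} (hk : 0 ≤ k)
    (h : k < boundaryGP w a (Sum.inl p)) :
    ∀ᶠ n in atTop, k < gromovProduct w (u.1 n) p := by
  apply ev_gt_of_liminf_gt hk
  refine lt_of_lt_of_le h ?_
  rw [boundaryGP_inl_def]
  exact csInf_le (bddBelow_inl a p) ⟨u, hu, rfl⟩

variable {δ : ℝ} (hδ : ∀ w x y z : X,
    min (gromovProduct w x y) (gromovProduct w y z) - δ ≤ gromovProduct w x z)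
include hδ

theorem transfer (hδ0 : 0 ≤ δ) {a b : GromovBoundary w} (u0 v0 u v : BoundarySeq w)
    (hu0 : boundaryPt w u0 = a) (hv0 : boundaryPt w v0 = b)
    (hu : boundaryPt w u = a) (hv : boundaryPt w v = b) {K : ℝ} {T0 : ℕ}
    (h : ∀ n m : ℕ, T0 ≤ n → T0 ≤ m → K + 2*δ ≤ gromovProduct w (u0.1 n) (v0.1 m)) :
    ∃ T : ℕ, ∀ n m : ℕ, T ≤ n → T ≤ m → K ≤ gromovProduct w (u.1 n) (v.1 m) := by
  have h1 : SeqEquiv w u.1 u0.1 := (boundaryPt_eq_iff hδ).mp (hu.trans hu0.symm)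
  have h2 : SeqEquiv w v0.1 v.1 := (boundaryPt_eq_iff hδ).mp (hv0.trans hv.symm)
  rw [seqEquiv_iff] at h1 h2
  obtain ⟨N1, hN1⟩ := h1 (K + 2*δ)
  obtain ⟨N2, hN2⟩ := h2 (K + 2*δ)
  set p := max N1 (max N2 T0) with hp
  refine ⟨max N1 N2, fun n m hn hm => ?_⟩
  have e0 : K + 2*δ ≤ gromovProduct w (u0.1 p) (v0.1 p) :=
    h p p (le_max_of_le_right (le_max_right _ _)) (le_max_of_le_right (le_max_right _ _))
  have e2 : K + 2*δ ≤ gromovProduct w (v0.1 p) (v.1 m) :=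
    hN2 p m (le_max_of_le_right (le_max_left _ _)) (le_trans (le_max_right _ _) hm)
  have s1 := gp_chain hδ e0 e2
  rw [min_self] at s1
  have e1 : K + 2*δ ≤ gromovProduct w (u.1 n) (u0.1 p) :=
    hN1 n p (le_trans (le_max_left _ _) hn) (le_max_left _ _)
  have s2 := gp_chain hδ e1 (show K + δ ≤ gromovProduct w (u0.1 p) (v.1 m) by linarith)
  rw [min_eq_right (by linarith)] at s2
  linarith

theorem le_boundaryGP_inr (hδ0 : 0 ≤ δ) {a b : GromovBoundary w} (hab : a ≠ b)
    (u0 v0 : BoundarySeq w) (hu0 : boundaryPt w u0 = a) (hv0 : boundaryPt w v0 = b)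
    {K : ℝ} {T0 : ℕ}
    (h : ∀ n m : ℕ, T0 ≤ n → T0 ≤ m → K + 2*δ ≤ gromovProduct w (u0.1 n) (v0.1 m)) :
    K ≤ boundaryGP w a (Sum.inr b) := by
  rw [boundaryGP_inr_def]
  have hne : (Set.Nonempty {r : ℝ | ∃ u v : BoundarySeq w, boundaryPt w u = a ∧
      boundaryPt w v = b ∧ r = liminf (fun n => gromovProduct w (u.1 n) (v.1 n)) atTop}) :=
    ⟨liminf (fun n => gromovProduct w (u0.1 n) (v0.1 n)) atTop, u0, v0, hu0, hv0, rfl⟩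
  apply le_csInf hne
  rintro r ⟨u, v, hu, hv, rfl⟩
  obtain ⟨T, hT⟩ := transfer hδ hδ0 u0 v0 u v hu0 hv0 hu hv h
  apply liminf_ge_of_ev (eventually_atTop.mpr ⟨T, fun n hn => hT n n hn hn⟩)
  intro htend
  have : boundaryPt w u = boundaryPt w v :=
    (boundaryPt_eq_iff hδ).mpr (seqEquiv_of_diag hδ hδ0 u.2 v.2 htend)
  exact hab (hu ▸ hv ▸ this)

end bgp


section orbit
variable {w : X}

theorem zpow_apply_add (f : X ≃ᵢ X) (a b : ℤ) (x : X) : (f^a) ((f^b) x) = (f^(a+b)) x := by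
  rw [zpow_add]; rfl

theorem dist_zpow_zpow (f : X ≃ᵢ X) (a b : ℤ) :
    dist ((f^a) w) ((f^b) w) = dist w ((f^(b-a)) w) := by
  have h : (f^a) ((f^(b-a)) w) = (f^b) w := by rw [zpow_apply_add]; ring_nf
  calc dist ((f^a) w) ((f^b) w) = dist ((f^a) w) ((f^a) ((f^(b-a)) w)) := by rw [h]
    _ = dist w ((f^(b-a)) w) := (f^a).isometry.dist_eq _ _

theorem dist_zpow_neg (f : X ≃ᵢ X) (z : ℤ) : dist w ((f^(-z)) w) = dist w ((f^z) w) := by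
  calc dist w ((f^(-z)) w) = dist ((f^z) w) ((f^z) ((f^(-z)) w)) := ((f^z).isometry.dist_eq _ _).symm
    _ = dist ((f^z) w) ((f^(z + -z)) w) := by rw [zpow_apply_add]
    _ = dist w ((f^z) w) := by rw [add_neg_cancel]; simp [dist_comm]

theorem orbit_bound (δ : ℝ) (hδ0 : 0 ≤ δ)
    (hδ : ∀ w x y z : X, min (gromovProduct w x y) (gromovProduct w y z) - δ ≤ gromovProduct w x z)
    (f : X ≃ᵢ X) {t : ℝ} (ht : 0 < t)
    (hf : ∀ m n : ℤ, t * |(m:ℝ) - (n:ℝ)| ≤ dist ((f^m) w) ((f^n) w))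
    (hcti : ∀ R : ℝ, ∃ S : ℤ, 0 ≤ S ∧ ∀ b b' : ℤ, S ≤ b → S ≤ b' →
      R ≤ gromovProduct w ((f^b) w) ((f^b') w)) :
    ∃ M0 : ℝ, 0 ≤ M0 ∧ ∃ N0 : ℤ, 0 < N0 ∧ ∀ a j : ℤ, N0 ≤ a → N0 ≤ j →
      gromovProduct w ((f^a) w) ((f^(-j)) w) ≤ M0 := by
  set D : ℤ → ℝ := fun z => dist w ((f^z) w) with hDdef
  have hDd : ∀ a b : ℤ, dist ((f^a) w) ((f^b) w) = D (b - a) := fun a b => dist_zpow_zpow f a b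
  have hDneg : ∀ z : ℤ, D (-z) = D z := fun z => dist_zpow_neg f z
  have hD0 : ∀ z : ℤ, 0 ≤ D z := fun z => dist_nonneg
  have hDsub : ∀ a b : ℤ, D (a + b) ≤ D a + D b := by
    intro a b
    have htr := dist_triangle w ((f^a) w) ((f^(a+b)) w)
    have : dist ((f^a) w) ((f^(a+b)) w) = D b := by rw [hDd]; ring_nf
    simpa [hDdef, this] using htr
  have hDge : ∀ z : ℤ, t * |(z:ℝ)| ≤ D z := by
    intro z
    have := hf z 0
    simpa [hDdef, dist_comm] using this
  have hGP : ∀ a b : ℤ, gromovProduct w ((f^a) w) ((f^b) w) = (D a + D b - D (b - a)) / 2 := by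
    intro a b
    unfold gromovProduct
    rw [dist_comm ((f^a) w) w, hDd a b]
  set L : ℤ → ℤ → ℝ := fun a b => D a + D b - D (a + b) with hLdef
  have hGPneg : ∀ a j : ℤ, gromovProduct w ((f^a) w) ((f^(-j)) w) = L a j / 2 := by
    intro a j
    rw [hGP a (-j), hDneg, show -j - a = -(a + j) by ring, hDneg]
  -- triangle-type bounds for L
  have hL0 : ∀ a b : ℤ, 0 ≤ L a b := by
    intro a b; have := hDsub a b; simp only [hLdef]; linarith
  have hDcomm : ∀ z : ℤ, dist ((f^z) w) w = D z := fun z => dist_comm _ _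
  -- ZIG
  have zig : ∀ n b b' : ℤ, 2 * D n ≤ D b + D b' - D (b' - b) → L n b' ≤ L n b + 2*δ := by
    intro n b b' hcond
    have h4 := four_point hδ ((f^(-b)) w) ((f^(-b')) w) w ((f^n) w)
    rw [show dist ((f^(-b)) w) ((f^n) w) = D (n + b) from by rw [hDd]; congr 1; ring,
      show dist ((f^(-b')) w) w = D b' from by rw [hDcomm, hDneg],
      show dist ((f^(-b)) w) w = D b from by rw [hDcomm, hDneg],
      show dist ((f^(-b')) w) ((f^n) w) = D (n + b') from by rw [hDd]; congr 1; ring,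
      show dist ((f^(-b)) w) ((f^(-b')) w) = D (b - b') from by rw [hDd]; congr 1; ring,
      show dist w ((f^n) w) = D n from rfl] at h4
    have hDneg' : D (b' - b) = D (b - b') := by
      rw [show b' - b = -(b - b') by ring, hDneg]
    rw [hDneg'] at hcond
    have tri4 : D b' ≤ D (n + b') + D n := by
      have := hDsub (n + b') (-n)
      rw [show n + b' + -n = b' by ring, hDneg] at this
      linarith
    simp only [hLdef]
    rcases max_cases (D b + D (n + b')) (D (b - b') + D n) with ⟨hm, _⟩ | ⟨hm, hle⟩ <;>
      rw [hm] at h4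
    · linarith
    · linarith
  -- telescope : products with far tails are frequently small
  have notH : ∀ i : ℤ, 8*δ + 2 ≤ t * i → ∀ b0 : ℤ, 0 ≤ b0 →
      ∃ b, b0 ≤ b ∧ L i b < D i - (8*δ+1) := by
    intro i hti b0 hb0
    have hipos : (0:ℝ) < (i:ℝ) := by nlinarith
    by_contra hcon
    push_neg at hcon
    have key : ∀ k : ℕ, D (b0 + k*i) ≤ D b0 + k*(8*δ+1) := by
      intro k
      induction k with
      | zero => simp
      | succ k ih =>
        have hbk : b0 ≤ b0 + k*i := by
          have : (0:ℤ) ≤ k*i := mul_nonneg (Int.natCast_nonneg k) (by exact_mod_cast hipos.le)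
          omega
        have hL := hcon (b0 + k*i) hbk
        have : D (b0 + (k*i) + i) = D (b0 + k*i) + D i - L i (b0 + k*i) := by
          simp only [hLdef]
          rw [show i + (b0 + k*i) = b0 + k*i + i by ring]
          ring
        have step : D (b0 + (k*i) + i) ≤ D (b0 + k*i) + (8*δ+1) := by rw [this]; linarith
        calc D (b0 + (k+1:ℕ)*i) = D (b0 + (k*i) + i) := by congr 1; push_cast; ring
          _ ≤ D (b0 + k*i) + (8*δ+1) := step
          _ ≤ D b0 + k*(8*δ+1) + (8*δ+1) := by linarith
          _ = D b0 + (k+1:ℕ)*(8*δ+1) := by push_cast; ring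
    have lower : ∀ k : ℕ, t*(b0:ℝ) + k*(t*i) ≤ D (b0 + k*i) := by
      intro k
      have h1 := hDge (b0 + k*i)
      have h2 : (0:ℝ) ≤ ((b0 + k*i : ℤ):ℝ) := by
        push_cast
        have : (0:ℝ) ≤ (k:ℝ)*(i:ℝ) := mul_nonneg (Nat.cast_nonneg k) hipos.le
        have hb0' : (0:ℝ) ≤ (b0:ℝ) := by exact_mod_cast hb0
        linarith
      rw [abs_of_nonneg h2] at h1
      push_cast at h1 ⊢
      nlinarith
    set Cc := D b0 - t*(b0:ℝ) with hCc
    have hfin : ∀ k : ℕ, (k:ℝ) * (t*i - (8*δ+1)) ≤ Cc := by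
      intro k
      have := key k
      have := lower k
      simp only [hCc]
      nlinarith
    have hone : (1:ℝ) ≤ t*i - (8*δ+1) := by
      push_cast at hti ⊢
      linarith
    obtain ⟨k, hk⟩ := exists_nat_gt Cc
    have := hfin k
    nlinarith
  -- choose scales
  set i1 : ℤ := ⌈(8*δ + 2)/t⌉ with hi1def
  have hti1 : 8*δ + 2 ≤ t * i1 := by
    have h1 : (8*δ+2)/t ≤ (i1:ℝ) := Int.le_ceil _
    calc 8*δ+2 = t * ((8*δ+2)/t) := by field_simp
      _ ≤ t * i1 := by apply mul_le_mul_of_nonneg_left h1 ht.le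
  obtain ⟨S, hS0, hSp⟩ := hcti (D i1)
  have hSbig : ∀ b b' : ℤ, S ≤ b → S ≤ b' → 2 * D i1 ≤ D b + D b' - D (b' - b) := by
    intro b b' hb hb'
    have := hSp b b' hb hb'
    rw [hGP] at this
    linarith
  -- eventual smallness at scale i1
  have t3 : ∀ b : ℤ, S ≤ b → L i1 b ≤ D i1 - 6*δ - 1 := by
    intro b hb
    obtain ⟨b', hb', hsmall⟩ := notH i1 hti1 S hS0
    have := zig i1 b' b (hSbig b' b hb' hb)
    linarith
  -- HEART
  have heart : ∀ m j : ℤ, S ≤ m → S ≤ j → L (i1 + m) j ≤ D i1 - 4*δ - 1 := by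
    intro m j hm hj
    set k : ℤ := i1 + m with hk
    have h4 := four_point hδ ((f^(-i1)) w) ((f^(-k)) w) w ((f^j) w)
    rw [show dist ((f^(-i1)) w) ((f^j) w) = D (i1 + j) from by rw [hDd]; congr 1; ring,
      show dist ((f^(-k)) w) w = D k from by rw [hDcomm, hDneg],
      show dist ((f^(-i1)) w) w = D i1 from by rw [hDcomm, hDneg],
      show dist ((f^(-k)) w) ((f^j) w) = D (k + j) from by rw [hDd]; congr 1; ring,
      show dist ((f^(-i1)) w) ((f^(-k)) w) = D m from by
        rw [hDd, show -k - -i1 = -m from by rw [hk]; ring, hDneg],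
      show dist w ((f^j) w) = D j from rfl] at h4
    -- h4 : D (i1+j) + D k ≤ max (D i1 + D (k+j)) (D m + D j) + 2δ
    have hLj := t3 j hj
    have hLm := t3 m hm
    have hkj : D k = D i1 + D m - L i1 m := by simp only [hLdef, hk]; ring
    have hij : D (i1 + j) = D i1 + D j - L i1 j := by simp only [hLdef]; ring
    have hU21 : D m + D j + 2*δ < D (i1 + j) + D k := by
      rw [hkj, hij]; linarith
    rcases max_cases (D i1 + D (k + j)) (D m + D j) with ⟨hmx, _⟩ | ⟨hmx, hle⟩ <;>
      rw [hmx] at h4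
    · -- U2 ≤ U3 + 2δ
      simp only [hLdef] at hLj ⊢
      simp only [hk] at h4 ⊢
      linarith
    · linarith
  refine ⟨max ((D i1 - 4*δ - 1)/2) 0, le_max_right _ _, max (i1 + S) 1, by positivity, ?_⟩
  intro a j ha hj
  rw [hGPneg]
  have hm : S ≤ a - i1 := by
    have := le_trans (le_max_left (i1+S) 1) ha
    omega
  have hj' : S ≤ j := by
    have h1 := le_trans (le_max_left (i1+S) 1) hj
    have : 0 < i1 := by
      by_contra hneg
      push_neg at hneg
      have : (i1:ℝ) ≤ 0 := by exact_mod_cast hneg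
      nlinarith
    omega
  have := heart (a - i1) j hm hj'
  rw [show i1 + (a - i1) = a by ring] at this
  have h9 : L a j / 2 ≤ (D i1 - 4*δ - 1)/2 := by
    simp only [hLdef] at this ⊢
    linarith
  exact le_trans h9 (le_max_left _ _)

end orbit
end IHN

namespace IHN
section helpers
variable {w : X}

theorem inv_zpow_apply (f : X ≃ᵢ X) (z : ℤ) (x : X) : ((f⁻¹)^z) x = (f^(-z)) x := by
  rw [inv_zpow, ← zpow_neg]

theorem symm_zpow_apply (f : X ≃ᵢ X) (z : ℤ) (x : X) : (f^z).symm x = (f^(-z)) x := by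
  rw [zpow_neg]; rfl

/-- `(f^z q · f^z w)_w = d(w, f^{-z} w) - (q · f^{-z} w)_w`. -/
theorem gp_shift (f : X ≃ᵢ X) (z : ℤ) (q : X) (w : X) :
    gromovProduct w ((f^z) q) ((f^z) w) =
      dist ((f^(-z)) w) w - gromovProduct w q ((f^(-z)) w) := by
  have h1 := gromovProduct_isometry (f^z) w q w
  rw [symm_zpow_apply] at h1
  have h2 := gp_base_swap ((f^(-z)) w) w q
  linarith

section hyp3
variable {δ : ℝ} (hδ : ∀ w x y z : X,
    min (gromovProduct w x y) (gromovProduct w y z) - δ ≤ gromovProduct w x z)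
include hδ

theorem gp_extract {x y z : X} {C : ℝ} (h1 : gromovProduct w x z ≤ C)
    (h2 : C + δ < gromovProduct w y z) : gromovProduct w x y ≤ C + δ := by
  have h := hδ w x y z
  have hyz : gromovProduct w y z = gromovProduct w y z := rfl
  rcases min_cases (gromovProduct w x y) (gromovProduct w y z) with ⟨hm, _⟩ | ⟨hm, hle⟩ <;>
    rw [hm] at h <;> linarith

end hyp3

set_option maxHeartbeats 2000000 in
theorem orbit_facts {f : X ≃ᵢ X} {A : GromovBoundary w}
    (hA : IsAttractingFixedPt w f A) :
    ∃ h : ConvergesToInfinity w (fun n : ℕ => (f ^ (n:ℤ)) w),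
      boundaryPt w ⟨fun n : ℕ => (f ^ (n:ℤ)) w, h⟩ = A := by
  obtain ⟨x, hx, hmk⟩ := hA
  have hc : ∀ n : ℕ, dist ((f^(n:ℤ)) x) ((f^(n:ℤ)) w) ≤ dist x w :=
    fun n => le_of_eq ((f^(n:ℤ)).isometry.dist_eq x w)
  have h := cti_of_close hc hx
  refine ⟨h, ?_⟩
  rw [← hmk]
  have hxx : SeqEquiv w (fun n : ℕ => (f^(n:ℤ)) x) (fun n : ℕ => (f^(n:ℤ)) x) := hx
  have hq : boundaryPt w (⟨fun n : ℕ => (f^(n:ℤ)) x, hx⟩ : BoundarySeq w) =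
      boundaryPt w ⟨fun n : ℕ => (f^(n:ℤ)) w, h⟩ :=
    Quot.sound (seqEquiv_of_close_right hc hxx)
  exact hq.symm

theorem closureMap_inl (w : X) (F : X ≃ᵢ X) (p : X) :
    closureMap w F (Sum.inl p) = Sum.inl (F p) := rfl

theorem closureMap_inr (w : X) (F : X ≃ᵢ X) (Q : GromovBoundary w) :
    closureMap w F (Sum.inr Q) = Sum.inr (boundaryMap w F Q) := rfl

theorem boundaryMap_mk (w : X) (F : X ≃ᵢ X) (u : BoundarySeq w) :
    boundaryMap w F (boundaryPt w u) =
      boundaryPt w ⟨fun n => F (u.1 n), convergesToInfinity_isometry F u.2⟩ := rfl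

theorem nbhd_of_basis {w : X} {a : GromovBoundary w} {k : ℝ} (hk : 0 < k)
    {p : GromovClosure w} (hp : k < boundaryGP w a p) :
    IsNeighborhood w {y | k < boundaryGP w a y} p := by
  unfold IsNeighborhood
  letI : TopologicalSpace (GromovClosure w) := closureTop w
  exact IsOpen.mem_nhds (TopologicalSpace.isOpen_generateFrom_of_mem (Or.inr ⟨a, k, hk, rfl⟩)) hp


theorem orbit_facts_neg {f : X ≃ᵢ X} {A : GromovBoundary w}
    (hA : IsAttractingFixedPt w f⁻¹ A) :
    ∃ h : ConvergesToInfinity w (fun n : ℕ => (f ^ (-(n:ℤ))) w),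
      boundaryPt w ⟨fun n : ℕ => (f ^ (-(n:ℤ))) w, h⟩ = A := by
  obtain ⟨h, hmk⟩ := orbit_facts hA
  have he : (fun n : ℕ => ((f⁻¹) ^ ((n:ℕ):ℤ)) w) = (fun n : ℕ => (f ^ (-(n:ℤ))) w) :=
    funext fun n => inv_zpow_apply f _ w
  have h2 : ConvergesToInfinity w (fun n : ℕ => (f ^ (-(n:ℤ))) w) := he ▸ h
  have hst : (⟨fun n : ℕ => ((f⁻¹) ^ ((n:ℕ):ℤ)) w, h⟩ : BoundarySeq w) = ⟨_, h2⟩ :=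
    Subtype.ext he
  exact ⟨h2, (congrArg (boundaryPt w) hst).symm.trans hmk⟩


theorem rate_lower {w : X} {f : X ≃ᵢ X} {t : ℝ}
    (h : ∀ m n : ℤ, t * |(m:ℝ) - (n:ℝ)| ≤ dist ((f^m) w) ((f^n) w)) (z : ℤ) :
    t * |(z:ℝ)| ≤ dist w ((f^z) w) := by
  have h3 := h z 0
  simpa [dist_comm] using h3

end helpers
end IHN

-- INSERT2

/-- If `f` and `g` are independent hyperbolic isometries (their
fixed-point pairs on `∂X` are disjoint), with `A₊`, `A₋` the attracting and
repelling fixed points of `f`, then there are disjoint neighborhoods `U₊` of `A₊`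
and `U₋` of `A₋` in `X̄` and `N ≥ 1` such that `g^k U₊ ∩ U₋ = ∅` for all `k ≥ N`. -/
theorem independent_hyperbolic_neighborhoods (δ : ℝ) (hX : IsDeltaHyperbolic X δ) (w : X)
    (f g : X ≃ᵢ X) (hf : IsHyperbolicIsometry f) (hg : IsHyperbolicIsometry g)
    (Aplus Aminus Bplus Bminus : GromovBoundary w)
    (hAp : IsAttractingFixedPt w f Aplus) (hAm : IsRepellingFixedPt w f Aminus)
    (hBp : IsAttractingFixedPt w g Bplus) (hBm : IsRepellingFixedPt w g Bminus)
    (hindep : (({Aplus, Aminus} : Set (GromovBoundary w)) ∩ {Bplus, Bminus}) = ∅) :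
    ∃ Uplus Uminus : Set (GromovClosure w),
      IsNeighborhood w Uplus (Sum.inr Aplus) ∧
      IsNeighborhood w Uminus (Sum.inr Aminus) ∧
      Uplus ∩ Uminus = ∅ ∧
      ∃ N : ℕ, 1 ≤ N ∧ ∀ k : ℕ, N ≤ k →
        (closureMap w (g ^ k) '' Uplus) ∩ Uminus = ∅ := by
  classical
  obtain ⟨hδ0, -, -, -, hδ⟩ := hX
  -- translation rates at w
  obtain ⟨tf, htf, htf2⟩ := hf w
  obtain ⟨tg, htg, htg2⟩ := hg w
  -- w-based orbit sequences
  obtain ⟨hFp, hFpA⟩ := IHN.orbit_facts hAp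
  obtain ⟨hFm, hFmA⟩ := IHN.orbit_facts_neg hAm
  obtain ⟨hGp, hGpA⟩ := IHN.orbit_facts hBp
  obtain ⟨hGm, hGmA⟩ := IHN.orbit_facts_neg hBm
  set Fp : ℕ → X := fun n => (f ^ (n:ℤ)) w with hFpdef
  set Fm : ℕ → X := fun n => (f ^ (-(n:ℤ))) w with hFmdef
  set Gp : ℕ → X := fun n => (g ^ (n:ℤ)) w with hGpdef
  set Gm : ℕ → X := fun n => (g ^ (-(n:ℤ))) w with hGmdef
  set FpS : BoundarySeq w := ⟨Fp, hFp⟩ with hFpS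
  set FmS : BoundarySeq w := ⟨Fm, hFm⟩ with hFmS
  set GpS : BoundarySeq w := ⟨Gp, hGp⟩ with hGpS
  set GmS : BoundarySeq w := ⟨Gm, hGm⟩ with hGmS
  -- independence
  rw [Set.eq_empty_iff_forall_notMem] at hindep
  have nAB : Aplus ≠ Bplus := fun h => hindep Bplus ⟨by simp [← h], by simp⟩
  have nABm : Aplus ≠ Bminus := fun h => hindep Bminus ⟨by simp [← h], by simp⟩
  have nAmB : Aminus ≠ Bplus := fun h => hindep Bplus ⟨by simp [← h], by simp⟩
  have nAmBm : Aminus ≠ Bminus := fun h => hindep Bminus ⟨by simp [← h], by simp⟩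
  -- orbit bound for f
  have hctif : ∀ R : ℝ, ∃ S : ℤ, 0 ≤ S ∧ ∀ b b' : ℤ, S ≤ b → S ≤ b' →
      R ≤ gromovProduct w ((f^b) w) ((f^b') w) := by
    intro R
    obtain ⟨N, hN⟩ := IHN.cti_iff.mp hFp R
    refine ⟨(N:ℤ), Int.natCast_nonneg N, fun b b' hb hb' => ?_⟩
    have hb0 : 0 ≤ b := le_trans (Int.natCast_nonneg N) hb
    have hb'0 : 0 ≤ b' := le_trans (Int.natCast_nonneg N) hb'
    have := hN b.toNat b'.toNat (by omega) (by omega)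
    simp only [hFpdef] at this
    rwa [Int.toNat_of_nonneg hb0, Int.toNat_of_nonneg hb'0] at this
  have hctig : ∀ R : ℝ, ∃ S : ℤ, 0 ≤ S ∧ ∀ b b' : ℤ, S ≤ b → S ≤ b' →
      R ≤ gromovProduct w ((g^b) w) ((g^b') w) := by
    intro R
    obtain ⟨N, hN⟩ := IHN.cti_iff.mp hGp R
    refine ⟨(N:ℤ), Int.natCast_nonneg N, fun b b' hb hb' => ?_⟩
    have hb0 : 0 ≤ b := le_trans (Int.natCast_nonneg N) hb
    have hb'0 : 0 ≤ b' := le_trans (Int.natCast_nonneg N) hb'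
    have := hN b.toNat b'.toNat (by omega) (by omega)
    simp only [hGpdef] at this
    rwa [Int.toNat_of_nonneg hb0, Int.toNat_of_nonneg hb'0] at this
  obtain ⟨Mf, hMf0, Nf, hNf0, hMf⟩ := IHN.orbit_bound δ hδ0 hδ f htf htf2 hctif
  obtain ⟨Mg, hMg0, Ng, hNg0, hMg⟩ := IHN.orbit_bound δ hδ0 hδ g htg htg2 hctig
  -- bounded products between distinct boundary points
  obtain ⟨M1, hM10, T1, hB1⟩ := IHN.bounded_of_ne hδ hδ0
    (u := GpS) (v := FmS) (by rw [hGpA, hFmA]; exact fun h => nAmB h.symm)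
  obtain ⟨M2, hM20, T2, hB2⟩ := IHN.bounded_of_ne hδ hδ0
    (u := GpS) (v := FpS) (by rw [hGpA, hFpA]; exact fun h => nAB h.symm)
  obtain ⟨M3, hM30, T3, hB3⟩ := IHN.bounded_of_ne hδ hδ0
    (u := GmS) (v := FpS) (by rw [hGmA, hFpA]; exact fun h => nABm h.symm)
  -- master constant
  set C' : ℝ := max (max M1 M2) (max (max M3 Mf) Mg) with hC'
  have hC'0 : 0 ≤ C' := le_trans hM10 (le_max_of_le_left (le_max_left _ _))
  have hM1C : M1 ≤ C' := le_max_of_le_left (le_max_left _ _)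
  have hM2C : M2 ≤ C' := le_max_of_le_left (le_max_right _ _)
  have hM3C : M3 ≤ C' := le_max_of_le_right (le_max_of_le_left (le_max_left _ _))
  have hMfC : Mf ≤ C' := le_max_of_le_right (le_max_of_le_left (le_max_right _ _))
  have hMgC : Mg ≤ C' := le_max_of_le_right (le_max_right _ _)
  set k0 : ℝ := C' + 4*δ + 1 with hk0
  have hk0pos : 0 < k0 := by simp only [hk0]; linarith
  -- choose the scale M
  set M : ℕ := max (max T1 (max T2 T3)) (max Nf.toNat (Nat.ceil ((2*C' + 12*δ + 10)/tf)))
    with hM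
  have hMT1 : T1 ≤ M := le_max_of_le_left (le_max_left _ _)
  have hMT2 : T2 ≤ M := le_max_of_le_left (le_max_of_le_right (le_max_left _ _))
  have hMT3 : T3 ≤ M := le_max_of_le_left (le_max_of_le_right (le_max_right _ _))
  have hMNf : Nf ≤ (M:ℤ) := by
    have h1 : Nf.toNat ≤ M := le_max_of_le_right (le_max_left _ _)
    omega
  set DM : ℝ := dist w ((f^(M:ℤ)) w) with hDM
  have hDMbig : 2*C' + 12*δ + 10 ≤ DM := by
    have h1 : ((2*C' + 12*δ + 10)/tf) ≤ (Nat.ceil ((2*C' + 12*δ + 10)/tf) : ℝ) :=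
      Nat.le_ceil _
    have h2 : (Nat.ceil ((2*C' + 12*δ + 10)/tf) : ℝ) ≤ (M:ℝ) := by
      have : Nat.ceil ((2*C' + 12*δ + 10)/tf) ≤ M := le_max_of_le_right (le_max_right _ _)
      exact_mod_cast this
    have h3 := IHN.rate_lower htf2 (M:ℤ)
    rw [Int.cast_natCast, abs_of_nonneg (Nat.cast_nonneg M)] at h3
    calc 2*C' + 12*δ + 10 = tf * ((2*C' + 12*δ + 10)/tf) := by field_simp
      _ ≤ tf * (M:ℝ) := by apply mul_le_mul_of_nonneg_left (le_trans h1 h2) htf.le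
      _ ≤ DM := h3
  clear_value M
  -- unbundled versions of the bounded-product facts
  have hB1' : ∀ n m : ℕ, T1 ≤ n → T1 ≤ m → gromovProduct w (Gp n) (Fm m) ≤ M1 := hB1
  have hB2' : ∀ n m : ℕ, T2 ≤ n → T2 ≤ m → gromovProduct w (Gp n) (Fp m) ≤ M2 := hB2
  have hB3' : ∀ n m : ℕ, T3 ≤ n → T3 ≤ m → gromovProduct w (Gm n) (Fp m) ≤ M3 := hB3
  have hdneg : dist ((f^(-(M:ℤ))) w) w = DM := by
    rw [dist_comm, IHN.dist_zpow_neg f (M:ℤ)]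
  have hdpos : dist ((f^(M:ℤ)) w) w = DM := by rw [dist_comm]
  -- center sequences
  set u0 : ℕ → X := fun n => (f^(M:ℤ)) (Gp n) with hu0def
  have hu0 : ConvergesToInfinity w u0 := convergesToInfinity_isometry _ hGp
  set u0S : BoundarySeq w := ⟨u0, hu0⟩ with hu0S
  set cplus := boundaryPt w u0S with hcplus
  set v0 : ℕ → X := fun n => (f^(-(M:ℤ))) (Gp n) with hv0def
  have hv0 : ConvergesToInfinity w v0 := convergesToInfinity_isometry _ hGp
  set v0S : BoundarySeq w := ⟨v0, hv0⟩ with hv0S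
  set cminus := boundaryPt w v0S with hcminus
  -- H1 : centers stay close to the corresponding f-direction
  have H1 : ∀ n : ℕ, T1 ≤ n → DM - M1 ≤ gromovProduct w (u0 n) (Fp M) := by
    intro n hn
    have hs := IHN.gp_shift f (M:ℤ) (Gp n) w
    rw [hdneg] at hs
    have hb : gromovProduct w (Gp n) ((f^(-(M:ℤ))) w) ≤ M1 := hB1' n M hn hMT1
    have he1 : u0 n = (f^(M:ℤ)) (Gp n) := rfl
    have he2 : Fp M = (f^(M:ℤ)) w := rfl
    rw [he1, he2]
    linarith
  have H6 : ∀ n : ℕ, T2 ≤ n → DM - M2 ≤ gromovProduct w (v0 n) (Fm M) := by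
    intro n hn
    have hs := IHN.gp_shift f (-(M:ℤ)) (Gp n) w
    rw [neg_neg, hdpos] at hs
    have hb : gromovProduct w (Gp n) ((f^(M:ℤ)) w) ≤ M2 := hB2' n M hn hMT2
    have he1 : v0 n = (f^(-(M:ℤ))) (Gp n) := rfl
    have he2 : Fm M = (f^(-(M:ℤ))) w := rfl
    rw [he1, he2]
    linarith
  -- H2 : tails of the f-directions
  have H2 : ∀ i : ℕ, M + Nf.toNat ≤ i → DM - Mf ≤ gromovProduct w (Fp M) (Fp i) := by
    intro i hi
    have hs := IHN.gp_shift f (M:ℤ) ((f^((i:ℤ) - M)) w) w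
    have happ : (f^(M:ℤ)) ((f^((i:ℤ) - M)) w) = (f^(i:ℤ)) w := by
      rw [IHN.zpow_apply_add]; congr 1; ring
    rw [happ, hdneg] at hs
    have hb : gromovProduct w ((f^((i:ℤ) - M)) w) ((f^(-(M:ℤ))) w) ≤ Mf :=
      hMf ((i:ℤ) - M) (M:ℤ) (by omega) hMNf
    have he2 : Fp M = (f^(M:ℤ)) w := rfl
    have he3 : Fp i = (f^(i:ℤ)) w := rfl
    rw [he2, he3, IHN.gp_comm]
    linarith
  have H7 : ∀ j : ℕ, M + Nf.toNat ≤ j → DM - Mf ≤ gromovProduct w (Fm M) (Fm j) := by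
    intro j hj
    have hs := IHN.gp_shift f (-(M:ℤ)) ((f^((M:ℤ) - j)) w) w
    have happ : (f^(-(M:ℤ))) ((f^((M:ℤ) - j)) w) = (f^(-(j:ℤ))) w := by
      rw [IHN.zpow_apply_add]; congr 1; ring
    rw [happ, neg_neg, hdpos] at hs
    have hb : gromovProduct w ((f^((M:ℤ) - j)) w) ((f^(M:ℤ)) w) ≤ Mf := by
      have := hMf (M:ℤ) ((j:ℤ) - M) hMNf (by omega)
      rw [IHN.gp_comm]
      have harg : (f^((M:ℤ) - j)) w = (f^(-((j:ℤ) - M))) w := by congr 1; ring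
      rwa [← harg] at this
    have he2 : Fm M = (f^(-(M:ℤ))) w := rfl
    have he3 : Fm j = (f^(-(j:ℤ))) w := rfl
    rw [he2, he3, IHN.gp_comm]
    linarith
  -- the centers are distinct from the fixed points
  have H4 : cplus ≠ Aplus := by
    intro hEq
    have hse : SeqEquiv w u0 Fp :=
      (IHN.boundaryPt_eq_iff hδ (u := u0S) (v := FpS)).mp (hEq.trans hFpA.symm)
    have hse2 := seqEquiv_isometry (f^(-(M:ℤ))) hse
    have heq1 : (fun n : ℕ => (f^(-(M:ℤ))) (u0 n)) = Gp := by
      funext n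
      show (f^(-(M:ℤ))) ((f^(M:ℤ)) (Gp n)) = Gp n
      rw [IHN.zpow_apply_add, show -(M:ℤ) + M = 0 by ring]
      rfl
    have heq2 : (fun n : ℕ => (f^(-(M:ℤ))) (Fp n)) = (fun n : ℕ => (f^((n:ℤ) - M)) w) := by
      funext n
      show (f^(-(M:ℤ))) ((f^(n:ℤ)) w) = (f^((n:ℤ) - M)) w
      rw [IHN.zpow_apply_add]; congr 1; ring
    rw [heq1, heq2] at hse2
    have hctish : ConvergesToInfinity w (fun n : ℕ => (f^((n:ℤ) - M)) w) := by
      have h' := convergesToInfinity_isometry (f^(-(M:ℤ))) hFp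
      rwa [heq2] at h'
    have hse3 : SeqEquiv w (fun n : ℕ => (f^((n:ℤ) - M)) w) Fp := by
      rw [IHN.seqEquiv_iff]
      intro R
      obtain ⟨N, hN⟩ := IHN.cti_iff.mp hFp R
      refine ⟨N + M, fun i j hi hj => ?_⟩
      have hMi : M ≤ i := by omega
      have h5 := hN (i - M) j (by omega) (by omega)
      have harg : Fp (i - M) = (f^((i:ℤ) - M)) w := by
        show (f^(((i - M : ℕ)):ℤ)) w = _
        congr 1
        push_cast [Nat.cast_sub hMi]
        ring
      rwa [harg] at h5
    have hq1 : boundaryPt w GpS = boundaryPt w ⟨_, hctish⟩ := Quot.sound hse2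
    have hq2 : boundaryPt w (⟨_, hctish⟩ : BoundarySeq w) = boundaryPt w FpS :=
      Quot.sound hse3
    have : Bplus = Aplus := by rw [← hGpA]; exact (hq1.trans hq2).trans hFpA
    exact nAB this.symm
  have H4m : cminus ≠ Aminus := by
    intro hEq
    have hse : SeqEquiv w v0 Fm :=
      (IHN.boundaryPt_eq_iff hδ (u := v0S) (v := FmS)).mp (hEq.trans hFmA.symm)
    have hse2 := seqEquiv_isometry (f^(M:ℤ)) hse
    have heq1 : (fun n : ℕ => (f^(M:ℤ)) (v0 n)) = Gp := by
      funext n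
      show (f^(M:ℤ)) ((f^(-(M:ℤ))) (Gp n)) = Gp n
      rw [IHN.zpow_apply_add, show (M:ℤ) + -M = 0 by ring]
      rfl
    have heq2 : (fun n : ℕ => (f^(M:ℤ)) (Fm n)) = (fun n : ℕ => (f^((M:ℤ) - n)) w) := by
      funext n
      show (f^(M:ℤ)) ((f^(-(n:ℤ))) w) = (f^((M:ℤ) - n)) w
      rw [IHN.zpow_apply_add, show (M:ℤ) + -(n:ℤ) = (M:ℤ) - n from by ring]
    rw [heq1, heq2] at hse2
    have hctish : ConvergesToInfinity w (fun n : ℕ => (f^((M:ℤ) - n)) w) := by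
      have h' := convergesToInfinity_isometry (f^(M:ℤ)) hFm
      rwa [heq2] at h'
    have hse3 : SeqEquiv w (fun n : ℕ => (f^((M:ℤ) - n)) w) Fm := by
      rw [IHN.seqEquiv_iff]
      intro R
      obtain ⟨N, hN⟩ := IHN.cti_iff.mp hFm R
      refine ⟨N + M, fun i j hi hj => ?_⟩
      have hMi : M ≤ i := by omega
      have h5 := hN (i - M) j (by omega) (by omega)
      have harg : Fm (i - M) = (f^((M:ℤ) - i)) w := by
        show (f^(-((i - M : ℕ):ℤ))) w = _
        congr 1
        push_cast [Nat.cast_sub hMi]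
        ring
      rwa [harg] at h5
    have hq1 : boundaryPt w GpS = boundaryPt w ⟨_, hctish⟩ := Quot.sound hse2
    have hq2 : boundaryPt w (⟨_, hctish⟩ : BoundarySeq w) = boundaryPt w FmS :=
      Quot.sound hse3
    have : Bplus = Aminus := by rw [← hGpA]; exact (hq1.trans hq2).trans hFmA
    exact nAmB this.symm
  -- memberships
  set K : ℝ := DM - C' - 3*δ with hK
  set T0 : ℕ := max (max T1 T2) (M + Nf.toNat) with hT0
  have hbound1 : ∀ n m : ℕ, T0 ≤ n → T0 ≤ m →
      K + 2*δ ≤ gromovProduct w (u0S.1 n) (FpS.1 m) := by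
    intro n m hn hm
    have h1 := H1 n (le_trans (le_max_of_le_left (le_max_left _ _)) hn)
    have h2 := H2 m (le_trans (le_max_right _ _) hm)
    have h3 := IHN.gp_chain hδ h1 h2
    have hco : gromovProduct w (u0S.1 n) (FpS.1 m) = gromovProduct w (u0 n) (Fp m) := rfl
    rw [hco]
    rcases min_cases (DM - M1) (DM - Mf) with ⟨hmx, _⟩ | ⟨hmx, _⟩ <;> rw [hmx] at h3 <;>
      simp only [hK] <;> linarith
  have hbound2 : ∀ n m : ℕ, T0 ≤ n → T0 ≤ m →
      K + 2*δ ≤ gromovProduct w (v0S.1 n) (FmS.1 m) := by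
    intro n m hn hm
    have h1 := H6 n (le_trans (le_max_of_le_left (le_max_right _ _)) hn)
    have h2 := H7 m (le_trans (le_max_right _ _) hm)
    have h3 := IHN.gp_chain hδ h1 h2
    have hco : gromovProduct w (v0S.1 n) (FmS.1 m) = gromovProduct w (v0 n) (Fm m) := rfl
    rw [hco]
    rcases min_cases (DM - M2) (DM - Mf) with ⟨hmx, _⟩ | ⟨hmx, _⟩ <;> rw [hmx] at h3 <;>
      simp only [hK] <;> linarith
  have hk0K : k0 < K := by simp only [hK, hk0]; linarith
  have hmemP : k0 < boundaryGP w cplus (Sum.inr Aplus) :=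
    lt_of_lt_of_le hk0K (IHN.le_boundaryGP_inr hδ hδ0 H4 u0S FpS rfl hFpA hbound1)
  have hmemM : k0 < boundaryGP w cminus (Sum.inr Aminus) :=
    lt_of_lt_of_le hk0K (IHN.le_boundaryGP_inr hδ hδ0 H4m v0S FmS rfl hFmA hbound2)
  -- auxiliary upper bounds
  have H1' : ∀ n : ℕ, T1 ≤ n → Mf + δ < gromovProduct w (u0 n) (Fp M) := by
    intro n hn
    have := H1 n hn
    linarith
  have hcrossA : ∀ n j : ℕ, T1 ≤ n → M + Nf.toNat ≤ j →
      gromovProduct w (Fm j) (u0 n) ≤ Mf + δ := by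
    intro n j hn hj
    refine IHN.gp_extract hδ (z := Fp M) (C := Mf) ?_ ?_
    · -- gp w (Fm j) (Fp M) ≤ Mf
      have := hMf (M:ℤ) (j:ℤ) hMNf (by omega)
      rwa [IHN.gp_comm] at this
    · exact H1' n hn
  have H6' : ∀ m j : ℕ, T2 ≤ m → M + Nf.toNat ≤ j →
      DM - C' - δ ≤ gromovProduct w (v0 m) (Fm j) := by
    intro m j hm hj
    have h3 := IHN.gp_chain hδ (H6 m hm) (H7 j hj)
    rcases min_cases (DM - M2) (DM - Mf) with ⟨hmx, _⟩ | ⟨hmx, _⟩ <;> rw [hmx] at h3 <;>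
      linarith
  have H9 : ∀ n m : ℕ, max (max T1 T2) (M + Nf.toNat) ≤ n →
      max (max T1 T2) (M + Nf.toNat) ≤ m → gromovProduct w (u0 n) (v0 m) ≤ Mf + δ + δ := by
    intro n m hn hm
    refine IHN.gp_extract hδ (z := Fm (M + Nf.toNat)) (C := Mf + δ) ?_ ?_
    · -- gp w (u0 n) (Fm (M + Nf.toNat)) ≤ Mf + δ
      rw [IHN.gp_comm]
      exact hcrossA n (M + Nf.toNat) (le_trans (le_max_of_le_left (le_max_left _ _)) hn)
        le_rfl
    · -- Mf + 2δ < gp w (v0 m) (Fm (M + Nf.toNat))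
      have := H6' m (M + Nf.toNat) (le_trans (le_max_of_le_left (le_max_right _ _)) hm)
        le_rfl
      linarith
  have hGmu0 : ∀ n l : ℕ, T1 ≤ n → T3 ≤ l → gromovProduct w (Gm l) (u0 n) ≤ M3 + δ := by
    intro n l hn hl
    refine IHN.gp_extract hδ (C := M3) (hB3' l M hl hMT3) ?_
    have := H1 n hn
    linarith
  have hGpv0 : ∀ m l : ℕ, T2 ≤ m → T1 ≤ l → gromovProduct w (Gp l) (v0 m) ≤ M1 + δ := by
    intro m l hm hl
    refine IHN.gp_extract hδ (C := M1) (hB1' l M hl hMT1) ?_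
    have := H6 m hm
    linarith
  refine ⟨{y | k0 < boundaryGP w cplus y}, {y | k0 < boundaryGP w cminus y},
    IHN.nbhd_of_basis hk0pos hmemP, IHN.nbhd_of_basis hk0pos hmemM, ?_, ?_⟩
  · -- disjointness
    rw [Set.eq_empty_iff_forall_notMem]
    rintro y ⟨hy1, hy2⟩
    simp only [Set.mem_setOf_eq] at hy1 hy2
    set T9 : ℕ := max (max T1 T2) (M + Nf.toNat) with hT9
    have contra : ∀ n : ℕ, T9 ≤ n → ∀ p : X, k0 < gromovProduct w (u0 n) p →
        k0 < gromovProduct w (v0 n) p → False := by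
      intro n hn p h1 h2
      have h3 := IHN.gp_chain hδ (le_of_lt h1)
        (le_of_lt (show k0 < gromovProduct w p (v0 n) from (IHN.gp_comm w p (v0 n)) ▸ h2))
      rw [min_self] at h3
      have h4 := H9 n n hn hn
      simp only [hk0] at h3
      linarith
    cases y with
    | inl p =>
      have e1 := IHN.ev_of_lt_boundaryGP_inl u0S rfl hk0pos.le hy1
      have e2 := IHN.ev_of_lt_boundaryGP_inl v0S rfl hk0pos.le hy2
      obtain ⟨n, hn9, h1, h2⟩ := ((eventually_ge_atTop T9).and (e1.and e2)).exists
      exact contra n hn9 p h1 h2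
    | inr Q =>
      obtain ⟨q0S, hq0⟩ := Quot.exists_rep Q
      have e1 := IHN.ev_of_lt_boundaryGP_inr u0S q0S rfl hq0 hk0pos.le hy1
      have e2 := IHN.ev_of_lt_boundaryGP_inr v0S q0S rfl hq0 hk0pos.le hy2
      obtain ⟨n, hn9, h1, h2⟩ := ((eventually_ge_atTop T9).and (e1.and e2)).exists
      exact contra n hn9 (q0S.1 n) h1 h2
  · -- the g^k statement
    set a0 : ℕ := Ng.toNat with ha0
    have ha0Ng : (a0:ℤ) = Ng := Int.toNat_of_nonneg hNg0.le
    set TT : ℕ := max (max T1 (max T2 T3)) (max a0 (M + Nf.toNat)) with hTT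
    have hTT1 : T1 ≤ TT := le_max_of_le_left (le_max_left _ _)
    have hTT2 : T2 ≤ TT := le_max_of_le_left (le_max_of_le_right (le_max_left _ _))
    have hTT3 : T3 ≤ TT := le_max_of_le_left (le_max_of_le_right (le_max_right _ _))
    set NN : ℕ := max (max TT 1) (Nat.ceil ((2*C' + 10*δ + 10)/tg)) with hNN
    refine ⟨NN, le_trans (le_max_right _ _) (le_max_left _ _), fun k hk => ?_⟩
    have hkTT : TT ≤ k := le_trans (le_max_of_le_left (le_max_left _ _)) hk
    have hkg : Ng ≤ (k:ℤ) := by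
      have : a0 ≤ k := le_trans (le_max_of_le_right (le_max_left _ _)) hkTT
      omega
    have tgk : 2*C' + 10*δ + 10 ≤ dist w ((g^(-(k:ℤ))) w) := by
      have h3 := IHN.rate_lower htg2 (-(k:ℤ))
      rw [show ((-(k:ℤ):ℤ):ℝ) = -(k:ℝ) by push_cast; ring, abs_neg,
        abs_of_nonneg (Nat.cast_nonneg k)] at h3
      have h1 : ((2*C' + 10*δ + 10)/tg) ≤ (Nat.ceil ((2*C' + 10*δ + 10)/tg) : ℝ) :=
        Nat.le_ceil _
      have h2 : (Nat.ceil ((2*C' + 10*δ + 10)/tg) : ℝ) ≤ (k:ℝ) := by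
        have := le_trans (le_max_right _ _) hk
        exact_mod_cast this
      calc 2*C' + 10*δ + 10 = tg * ((2*C' + 10*δ + 10)/tg) := by field_simp
        _ ≤ tg * (k:ℝ) := by apply mul_le_mul_of_nonneg_left (le_trans h1 h2) htg.le
        _ ≤ dist w ((g^(-(k:ℤ))) w) := h3
    -- the main estimate
    have main : ∀ p : X, (∃ n : ℕ, TT ≤ n ∧ k0 < gromovProduct w (u0 n) p) →
        ∀ m : ℕ, TT ≤ m → gromovProduct w (v0 m) ((g^(k:ℤ)) p) ≤ C' + 2*δ := by
      rintro p ⟨n, hnT, hgp⟩ m hmT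
      -- (p | Gm k) is small
      have h1 : gromovProduct w (Gm k) p ≤ (M3 + δ) + δ := by
        refine IHN.gp_extract hδ (C := M3 + δ) (hGmu0 n k (le_trans hTT1 hnT)
          (le_trans hTT3 hkTT)) ?_
        rw [IHN.gp_comm]
        simp only [hk0] at hgp
        linarith
      -- (g^k p | far g-orbit point) is large
      have hbig : C' + 3*δ + 1 ≤ gromovProduct w ((g^(k:ℤ)) p) ((g^((k:ℤ) + a0)) w) := by
        have happ : (g^(k:ℤ)) ((g^(a0:ℤ)) w) = (g^((k:ℤ) + a0)) w :=
          IHN.zpow_apply_add g _ _ w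
        rw [← happ]
        have hiso := gromovProduct_isometry (g^(k:ℤ)) w p ((g^(a0:ℤ)) w)
        rw [IHN.symm_zpow_apply] at hiso
        rw [hiso]
        have hfar := IHN.gp_far hδ w ((g^(-(k:ℤ))) w) p ((g^(a0:ℤ)) w)
        have hb1 : gromovProduct w p ((g^(-(k:ℤ))) w) ≤ (M3 + δ) + δ := by
          rw [IHN.gp_comm]
          exact h1
        have hb2 : gromovProduct w ((g^(a0:ℤ)) w) ((g^(-(k:ℤ))) w) ≤ Mg := by
          have := hMg (a0:ℤ) (k:ℤ) (by omega) hkg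
          exact this
        have hmax : max (gromovProduct w p ((g^(-(k:ℤ))) w))
            (gromovProduct w ((g^(a0:ℤ)) w) ((g^(-(k:ℤ))) w)) ≤ C' + 2*δ := by
          apply max_le <;> linarith
        linarith
      -- (v0 m | far g-orbit point) is small
      have h6 : gromovProduct w (v0 m) ((g^((k:ℤ) + a0)) w) ≤ M1 + δ := by
        have := hGpv0 m (k + a0) (le_trans hTT2 hmT) (le_trans hTT1 (le_trans hkTT
          (Nat.le_add_right _ _)))
        rw [IHN.gp_comm] at this
        have harg : Gp (k + a0) = (g^((k:ℤ) + a0)) w := by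
          show (g^(((k + a0 : ℕ)):ℤ)) w = _
          norm_cast
        rwa [harg] at this
      have := IHN.gp_extract hδ (C := M1 + δ) h6
        (show (M1 + δ) + δ < gromovProduct w ((g^(k:ℤ)) p) ((g^((k:ℤ) + a0)) w) by linarith)
      linarith
    rw [Set.eq_empty_iff_forall_notMem]
    rintro y ⟨⟨y0, hy0U, rfl⟩, hyM⟩
    simp only [Set.mem_setOf_eq] at hy0U hyM
    cases y0 with
    | inl p =>
      have e1 := IHN.ev_of_lt_boundaryGP_inl u0S rfl hk0pos.le hy0U
      obtain ⟨n, hnT, h1⟩ := ((eventually_ge_atTop TT).and e1).exists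
      have hout : boundaryGP w cminus (Sum.inl ((g^k) p)) ≤ C' + 2*δ := by
        refine IHN.boundaryGP_inl_le v0S rfl (by linarith) ?_
        filter_upwards [eventually_ge_atTop TT] with m hm
        have := main p ⟨n, hnT, h1⟩ m hm
        rwa [zpow_natCast] at this
      rw [IHN.closureMap_inl] at hyM
      simp only [hk0] at hyM
      linarith
    | inr Q =>
      obtain ⟨q0S, hq0⟩ := Quot.exists_rep Q
      have e1 := IHN.ev_of_lt_boundaryGP_inr u0S q0S rfl hq0 hk0pos.le hy0U
      have himg : boundaryMap w (g^k) Q = boundaryPt w ⟨fun n => (g^k) (q0S.1 n),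
          convergesToInfinity_isometry (g^k) q0S.2⟩ := by
        rw [← hq0]
        rfl
      rw [IHN.closureMap_inr, himg] at hyM
      have hout : boundaryGP w cminus
          (Sum.inr (boundaryPt w ⟨fun n => (g^k) (q0S.1 n),
            convergesToInfinity_isometry (g^k) q0S.2⟩)) ≤ C' + 2*δ := by
        refine IHN.boundaryGP_inr_le v0S _ rfl rfl (by linarith) ?_
        filter_upwards [(eventually_ge_atTop TT).and e1] with m hm
        have := main (q0S.1 m) ⟨m, hm.1, hm.2⟩ m hm.1
        rwa [zpow_natCast] at this
      simp only [hk0] at hyM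
      linarith
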